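/- arXiv:1708.03218 — 2 statements merged into one kernel-verified Lean document; each statement's English description precedes it below -/
import Mathlib

section
/- Let K be a real n×n positive semidefinite matrix with positive semidefinite square root K^{1/2}, let P be a real n×m matrix, let r ≤ m, and set C = KP and W = PᵀKP; assume W is invertible. Let K^{1/2}P = F S Nᵀ be a singular value decomposition with F n×m having orthonormal columns, N m×m orthogonal, and S m×m diagonal with positive nonincreasing diagonal entries; write F_r and N_r for the first r columns of F and N, and S_r for the leading r×r block of S. Then the standard rank-r Nyström approximation satisfies C (N_r S_r^{-2} N_rᵀ) Cᵀ = K^{1/2} F_r F_rᵀ K^{1/2}; consequently K − C (N_r S_r^{-2} N_rᵀ) Cᵀ = K^{1/2}(I_n − F_r F_rᵀ)K^{1/2} is positive semidefinite. -/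
open Matrix
noncomputable def Matrix.PosSemidef.sqrt {n : Type*} [Fintype n] [DecidableEq n]
    {A : Matrix n n ℝ} (hA : A.PosSemidef) : Matrix n n ℝ :=
  hA.1.eigenvectorUnitary.1 * diagonal ((↑) ∘ (√·) ∘ hA.1.eigenvalues) *
    (star hA.1.eigenvectorUnitary : Matrix n n ℝ)

theorem Matrix.PosSemidef.posSemidef_sqrt {n : Type*} [Fintype n] [DecidableEq n]
    {A : Matrix n n ℝ} (hA : A.PosSemidef) : hA.sqrt.PosSemidef := by
  unfold Matrix.PosSemidef.sqrt
  have h := (Matrix.posSemidef_diagonal_iff (R := ℝ) (n := n)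
    (d := ((↑) ∘ (√·) ∘ hA.1.eigenvalues))).mpr (fun i => by simp [Real.sqrt_nonneg])
  have := h.mul_mul_conjTranspose_same (hA.1.eigenvectorUnitary : Matrix n n ℝ)
  simpa [Matrix.star_eq_conjTranspose] using this

theorem Matrix.PosSemidef.sqrt_mul_self {n : Type*} [Fintype n] [DecidableEq n]
    {A : Matrix n n ℝ} (hA : A.PosSemidef) : hA.sqrt * hA.sqrt = A := by
  unfold Matrix.PosSemidef.sqrt
  have hs := hA.1.spectral_theorem
  rw [Unitary.conjStarAlgAut_apply] at hs
  have hU : (star hA.1.eigenvectorUnitary : Matrix n n ℝ) * hA.1.eigenvectorUnitary.1 = 1 :=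
    Unitary.coe_star_mul_self _
  have hd : diagonal ((fun x : ℝ => x) ∘ (√·) ∘ hA.1.eigenvalues) *
      diagonal ((fun x : ℝ => x) ∘ (√·) ∘ hA.1.eigenvalues)
      = diagonal (RCLike.ofReal ∘ hA.1.eigenvalues) := by
    rw [diagonal_mul_diagonal]
    congr 1
    funext i
    simp [Real.mul_self_sqrt (hA.eigenvalues_nonneg i)]
  calc _ = hA.1.eigenvectorUnitary.1 * (diagonal ((fun x : ℝ => x) ∘ (√·) ∘ hA.1.eigenvalues) *
      ((star hA.1.eigenvectorUnitary : Matrix n n ℝ) * hA.1.eigenvectorUnitary.1) *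
      diagonal ((fun x : ℝ => x) ∘ (√·) ∘ hA.1.eigenvalues)) *
      (star hA.1.eigenvectorUnitary : Matrix n n ℝ) := by simp only [Matrix.mul_assoc]
    _ = _ := by rw [hU, Matrix.mul_one, hd, ← hs]

theorem stmt_4 {n m r : ℕ} (hrm : r ≤ m)
    (K : Matrix (Fin n) (Fin n) ℝ) (hK : K.PosSemidef)
    (P : Matrix (Fin n) (Fin m) ℝ)
    (C : Matrix (Fin n) (Fin m) ℝ) (W : Matrix (Fin m) (Fin m) ℝ)
    (hC : C = K * P) (hW : W = Pᵀ * K * P) (hWinv : IsUnit W)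
    -- singular value decomposition K^{1/2} P = F S Nᵀ, positive nonincreasing singular values
    (F : Matrix (Fin n) (Fin m) ℝ) (N : Matrix (Fin m) (Fin m) ℝ) (s : Fin m → ℝ)
    (hF : Fᵀ * F = 1) (hN : Nᵀ * N = 1) (hs : ∀ i, 0 < s i) (hmono : Antitone s)
    (hSVD : hK.sqrt * P = F * Matrix.diagonal s * Nᵀ) :
    C * (N.submatrix id (Fin.castLE hrm) *
          Matrix.diagonal (fun i : Fin r => (s (Fin.castLE hrm i) ^ 2)⁻¹) *
          (N.submatrix id (Fin.castLE hrm))ᵀ) * Cᵀ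
      = hK.sqrt * (F.submatrix id (Fin.castLE hrm)) * (F.submatrix id (Fin.castLE hrm))ᵀ * hK.sqrt ∧
    K - C * (N.submatrix id (Fin.castLE hrm) *
          Matrix.diagonal (fun i : Fin r => (s (Fin.castLE hrm i) ^ 2)⁻¹) *
          (N.submatrix id (Fin.castLE hrm))ᵀ) * Cᵀ
      = hK.sqrt * (1 - F.submatrix id (Fin.castLE hrm) * (F.submatrix id (Fin.castLE hrm))ᵀ) * hK.sqrt ∧
    (K - C * (N.submatrix id (Fin.castLE hrm) *
          Matrix.diagonal (fun i : Fin r => (s (Fin.castLE hrm i) ^ 2)⁻¹) *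
          (N.submatrix id (Fin.castLE hrm))ᵀ) * Cᵀ).PosSemidef := by
  set E : Matrix (Fin m) (Fin r) ℝ :=
    (1 : Matrix (Fin m) (Fin m) ℝ).submatrix id (Fin.castLE hrm) with hE
  set D : Matrix (Fin r) (Fin r) ℝ :=
    Matrix.diagonal (fun i : Fin r => (s (Fin.castLE hrm i) ^ 2)⁻¹) with hD
  have hNE : N.submatrix id (Fin.castLE hrm) = N * E := by
    ext i j
    simp [hE, Matrix.mul_apply, Matrix.one_apply]
  have hFE : F.submatrix id (Fin.castLE hrm) = F * E := by
    ext i j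
    simp [hE, Matrix.mul_apply, Matrix.one_apply]
  have hEE : Eᵀ * E = (1 : Matrix (Fin r) (Fin r) ℝ) := by
    ext i j
    simp [hE, Matrix.mul_apply, Matrix.one_apply, ite_and]
  have hsE : Matrix.diagonal s * E = E * Matrix.diagonal (fun i => s (Fin.castLE hrm i)) := by
    ext i j
    rw [Matrix.diagonal_mul, Matrix.mul_diagonal]
    simp only [hE, Matrix.submatrix_apply, id_eq, Matrix.one_apply]
    split_ifs with h
    · subst h; ring
    · ring
  have hEtS : Eᵀ * Matrix.diagonal s = Matrix.diagonal (fun i => s (Fin.castLE hrm i)) * Eᵀ := by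
    have := congrArg Matrix.transpose hsE
    simpa [Matrix.transpose_mul, Matrix.diagonal_transpose] using this
  have key : Matrix.diagonal s * E * D * Eᵀ * Matrix.diagonal s = E * Eᵀ := by
    rw [Matrix.mul_assoc (Matrix.diagonal s * E * D) Eᵀ, hEtS, hsE]
    have hone : ∀ i : Fin r,
        s (Fin.castLE hrm i) * (s (Fin.castLE hrm i) ^ 2)⁻¹ * s (Fin.castLE hrm i) = 1 := by
      intro i
      have h0 : s (Fin.castLE hrm i) ≠ 0 := (hs _).ne'
      field_simp
    have this1 : Matrix.diagonal (fun i => s (Fin.castLE hrm i)) * D *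
        Matrix.diagonal (fun i => s (Fin.castLE hrm i)) = (1 : Matrix (Fin r) (Fin r) ℝ) := by
      rw [hD, Matrix.diagonal_mul_diagonal, Matrix.diagonal_mul_diagonal]
      simp only [hone]
      exact Matrix.diagonal_one
    calc E * Matrix.diagonal (fun i => s (Fin.castLE hrm i)) * D *
          (Matrix.diagonal (fun i => s (Fin.castLE hrm i)) * Eᵀ)
        = E * (Matrix.diagonal (fun i => s (Fin.castLE hrm i)) * D *
            Matrix.diagonal (fun i => s (Fin.castLE hrm i))) * Eᵀ := by
          simp only [Matrix.mul_assoc]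
      _ = E * Eᵀ := by rw [this1, Matrix.mul_one]
  have hsqT : hK.sqrtᵀ = hK.sqrt := by
    have h := hK.posSemidef_sqrt.isHermitian
    simpa [Matrix.IsHermitian, Matrix.conjTranspose_eq_transpose_of_trivial] using h
  have hCs : C = hK.sqrt * (F * Matrix.diagonal s * Nᵀ) := by
    rw [hC]
    conv_lhs => rw [← hK.sqrt_mul_self]
    rw [Matrix.mul_assoc, hSVD]
  have hN' : ∀ {k : ℕ} (X : Matrix (Fin m) (Fin k) ℝ), Nᵀ * (N * X) = X := by
    intro k X
    rw [← Matrix.mul_assoc, hN, Matrix.one_mul]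
  have key' : ∀ (X : Matrix (Fin m) (Fin n) ℝ),
      Matrix.diagonal s * (E * (D * (Eᵀ * (Matrix.diagonal s * X)))) = E * (Eᵀ * X) := by
    intro X
    have := congrArg (· * X) key
    simpa [Matrix.mul_assoc] using this
  have h1 : C * (N.submatrix id (Fin.castLE hrm) * D * (N.submatrix id (Fin.castLE hrm))ᵀ) * Cᵀ
      = hK.sqrt * (F.submatrix id (Fin.castLE hrm)) * (F.submatrix id (Fin.castLE hrm))ᵀ *
        hK.sqrt := by
    rw [hCs, hNE, hFE]
    simp only [Matrix.transpose_mul, Matrix.diagonal_transpose, Matrix.transpose_transpose,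
      hsqT, Matrix.mul_assoc]
    rw [hN', hN', key']
  have h2 : K - C * (N.submatrix id (Fin.castLE hrm) * D * (N.submatrix id (Fin.castLE hrm))ᵀ) * Cᵀ
      = hK.sqrt * (1 - F.submatrix id (Fin.castLE hrm) * (F.submatrix id (Fin.castLE hrm))ᵀ) *
        hK.sqrt := by
    rw [h1, Matrix.mul_sub, Matrix.sub_mul, Matrix.mul_one, hK.sqrt_mul_self]
    simp only [Matrix.mul_assoc]
  refine ⟨h1, h2, ?_⟩
  rw [h2]
  have hFrF : (F.submatrix id (Fin.castLE hrm))ᵀ * F.submatrix id (Fin.castLE hrm)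
      = (1 : Matrix (Fin r) (Fin r) ℝ) := by
    rw [hFE, Matrix.transpose_mul]
    calc Eᵀ * Fᵀ * (F * E) = Eᵀ * (Fᵀ * F) * E := by simp only [Matrix.mul_assoc]
      _ = Eᵀ * E := by rw [hF, Matrix.mul_one]
      _ = 1 := hEE
  set Q : Matrix (Fin n) (Fin n) ℝ :=
    1 - F.submatrix id (Fin.castLE hrm) * (F.submatrix id (Fin.castLE hrm))ᵀ with hQdef
  have hidem : (F.submatrix id (Fin.castLE hrm) * (F.submatrix id (Fin.castLE hrm))ᵀ) *
      (F.submatrix id (Fin.castLE hrm) * (F.submatrix id (Fin.castLE hrm))ᵀ)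
      = F.submatrix id (Fin.castLE hrm) * (F.submatrix id (Fin.castLE hrm))ᵀ := by
    calc F.submatrix id (Fin.castLE hrm) * (F.submatrix id (Fin.castLE hrm))ᵀ *
          (F.submatrix id (Fin.castLE hrm) * (F.submatrix id (Fin.castLE hrm))ᵀ)
        = F.submatrix id (Fin.castLE hrm) *
            ((F.submatrix id (Fin.castLE hrm))ᵀ * F.submatrix id (Fin.castLE hrm)) *
            (F.submatrix id (Fin.castLE hrm))ᵀ := by simp only [Matrix.mul_assoc]
      _ = _ := by rw [hFrF, Matrix.mul_one]
  have hsymm : Qᴴ = Q := by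
    rw [Matrix.conjTranspose_eq_transpose_of_trivial, hQdef]
    simp [Matrix.transpose_sub, Matrix.transpose_mul, Matrix.transpose_transpose]
  have hQmul : Qᴴ * Q = Q := by
    rw [hsymm, hQdef]
    simp only [Matrix.mul_sub, Matrix.sub_mul, Matrix.mul_one, Matrix.one_mul, hidem]
    abel
  have hQpsd : Q.PosSemidef := by
    rw [← hQmul]
    exact Matrix.posSemidef_conjTranspose_mul_self _
  have hfin := hQpsd.mul_mul_conjTranspose_same hK.sqrt
  have hsqH : hK.sqrtᴴ = hK.sqrt := hK.posSemidef_sqrt.isHermitian.eq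
  rwa [hsqH] at hfin
end

section
/- (Theorem 3.) Let K be a real n×n positive definite matrix, let C be a real n×m matrix, and set P = K⁻¹C, so that C = KP and W_e := PᵀKP = CᵀK⁻¹C. Assume W_e is positive definite, and let W = W_e + E, where E is a real symmetric m×m matrix such that W is positive definite. Let W_e^{-1/2} denote the inverse of the positive definite square root of W_e, and set η = ‖W_e^{-1/2} E W_e^{-1/2}‖₂, the spectral norm. If η < 1, then ‖C W⁻¹ Cᵀ − C W_e⁻¹ Cᵀ‖₂ ≤ (η/(1−η)) · ‖K‖₂. -/
open Matrix

/-- Spectral norm (largest singular value / ℓ²→ℓ² operator norm) of a real matrix. -/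
noncomputable def specNorm {α β : Type*} [Fintype α] [Fintype β] [DecidableEq α] [DecidableEq β]
    (A : Matrix α β ℝ) : ℝ :=
  ‖(Matrix.toEuclideanLin A).toContinuousLinearMap‖

lemma sqrtPS_transpose {n : Type*} [Fintype n] [DecidableEq n]
    {A : Matrix n n ℝ} (hA : A.PosSemidef) : (Matrix.PosSemidef.sqrt hA)ᵀ = Matrix.PosSemidef.sqrt hA := by
  unfold Matrix.PosSemidef.sqrt
  rw [Matrix.transpose_mul, Matrix.transpose_mul, Matrix.diagonal_transpose]
  have h1 : ((star hA.1.eigenvectorUnitary : Matrix n n ℝ))ᵀ = hA.1.eigenvectorUnitary.1 := by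
    ext i j; simp [Matrix.star_apply]
  have h2 : (hA.1.eigenvectorUnitary.1)ᵀ = (star hA.1.eigenvectorUnitary : Matrix n n ℝ) := by
    ext i j; simp [Matrix.star_apply]
  rw [h1, h2, Matrix.mul_assoc]

lemma sqrtPS_mul_self {n : Type*} [Fintype n] [DecidableEq n]
    {A : Matrix n n ℝ} (hA : A.PosSemidef) : Matrix.PosSemidef.sqrt hA * Matrix.PosSemidef.sqrt hA = A := by
  unfold Matrix.PosSemidef.sqrt
  have hu : (star hA.1.eigenvectorUnitary : Matrix n n ℝ) * hA.1.eigenvectorUnitary.1 = 1 :=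
    Unitary.star_mul_self_of_mem hA.1.eigenvectorUnitary.2
  have hd : diagonal ((↑) ∘ (√·) ∘ hA.1.eigenvalues) * diagonal ((↑) ∘ (√·) ∘ hA.1.eigenvalues)
      = diagonal ((↑) ∘ hA.1.eigenvalues : n → ℝ) := by
    rw [diagonal_mul_diagonal]
    congr 1; funext i
    simp [Real.mul_self_sqrt (hA.eigenvalues_nonneg i)]
  calc _ = hA.1.eigenvectorUnitary.1 * (diagonal ((↑) ∘ (√·) ∘ hA.1.eigenvalues) *
        ((star hA.1.eigenvectorUnitary : Matrix n n ℝ) * hA.1.eigenvectorUnitary.1) *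
        diagonal ((↑) ∘ (√·) ∘ hA.1.eigenvalues)) * (star hA.1.eigenvectorUnitary : Matrix n n ℝ) := by
          simp only [Matrix.mul_assoc]
    _ = A := by
      rw [hu, Matrix.mul_one, hd]
      exact hA.1.spectral_theorem.symm

open scoped Matrix.Norms.L2Operator

private lemma specNorm_eq {a b : Type*} [Fintype a] [Fintype b] [DecidableEq a] [DecidableEq b]
    (A : Matrix a b ℝ) : specNorm A = ‖A‖ := rfl

private lemma ct_eq {a b : Type*} (A : Matrix a b ℝ) : Aᴴ = Aᵀ := by
  ext i j; simp [conjTranspose]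

private lemma norm_one_le (m : ℕ) : ‖(1 : Matrix (Fin m) (Fin m) ℝ)‖ ≤ 1 := by
  rw [Matrix.l2_opNorm_def]
  refine ContinuousLinearMap.opNorm_le_bound _ zero_le_one fun x => ?_
  simp [Matrix.toEuclideanLin_apply]

private lemma le_norm_mul {a b : ℕ} (A : Matrix (Fin a) (Fin b) ℝ)
    (y : EuclideanSpace ℝ (Fin b)) : ‖Matrix.toEuclideanLin A y‖ ≤ ‖A‖ * ‖y‖ :=
  ((Matrix.toEuclideanLin.trans LinearMap.toContinuousLinearMap) A).le_opNorm y

private lemma norm_inv_le {m : ℕ} (G : Matrix (Fin m) (Fin m) ℝ) (hG : IsUnit G.det)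
    (c : ℝ) (hc : 0 ≤ c)
    (h : ∀ y : EuclideanSpace ℝ (Fin m), ‖y‖ ≤ c * ‖Matrix.toEuclideanLin G y‖) :
    ‖G⁻¹‖ ≤ c := by
  rw [Matrix.l2_opNorm_def]
  refine ContinuousLinearMap.opNorm_le_bound _ hc fun x => ?_
  have key : Matrix.toEuclideanLin G (Matrix.toEuclideanLin G⁻¹ x) = x := by
    simp [Matrix.toEuclideanLin_apply, Matrix.mulVec_mulVec, Matrix.mul_nonsing_inv G hG]
  have := h (Matrix.toEuclideanLin G⁻¹ x)
  rw [key] at this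
  exact this

set_option maxHeartbeats 1000000 in
/-- Theorem 3: out-of-sample perturbation bound for the Nyström approximation. -/
theorem stmt_13 {n m : ℕ} (K : Matrix (Fin n) (Fin n) ℝ) (hK : K.PosDef)
    (C : Matrix (Fin n) (Fin m) ℝ)
    (P : Matrix (Fin n) (Fin m) ℝ) (hP : P = K⁻¹ * C)
    (We : Matrix (Fin m) (Fin m) ℝ) (hWe_def : We = Pᵀ * K * P) (hWe : We.PosDef)
    (E : Matrix (Fin m) (Fin m) ℝ) (hE : Eᵀ = E)
    (W : Matrix (Fin m) (Fin m) ℝ) (hW_def : W = We + E) (hW : W.PosDef)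
    (η : ℝ)
    (hη_def : η = specNorm ((Matrix.PosSemidef.sqrt hWe.posSemidef)⁻¹ * E * (Matrix.PosSemidef.sqrt hWe.posSemidef)⁻¹))
    (hη : η < 1) :
    specNorm (C * W⁻¹ * Cᵀ - C * We⁻¹ * Cᵀ) ≤ (η / (1 - η)) * specNorm K := by
  classical
  set S := Matrix.PosSemidef.sqrt hWe.posSemidef with hSdef
  have hSsymm : Sᵀ = S := by
    exact sqrtPS_transpose hWe.posSemidef
  have hSS : S * S = We := sqrtPS_mul_self hWe.posSemidef
  have hSdetne : S.det ≠ 0 := by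
    intro h
    apply hWe.det_pos.ne'
    rw [← hSS, Matrix.det_mul, h, mul_zero]
  have hSdet : IsUnit S.det := hSdetne.isUnit
  have hS1 : S * S⁻¹ = 1 := Matrix.mul_nonsing_inv S hSdet
  have hS2 : S⁻¹ * S = 1 := Matrix.nonsing_inv_mul S hSdet
  have hSinvT : (S⁻¹)ᵀ = S⁻¹ := by rw [Matrix.transpose_nonsing_inv, hSsymm]
  -- cancellation helpers
  have cS : ∀ {k : ℕ} (X : Matrix (Fin m) (Fin k) ℝ), S * (S⁻¹ * X) = X := fun X => by
    rw [← Matrix.mul_assoc, hS1, Matrix.one_mul]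
  have cS' : ∀ {k : ℕ} (X : Matrix (Fin m) (Fin k) ℝ), S⁻¹ * (S * X) = X := fun X => by
    rw [← Matrix.mul_assoc, hS2, Matrix.one_mul]
  set F := S⁻¹ * E * S⁻¹ with hFdef
  have hηF : η = ‖F‖ := by rw [hη_def, specNorm_eq]
  have hη0 : 0 ≤ η := hηF ▸ norm_nonneg F
  have h1η : 0 < 1 - η := by linarith
  set G := (1 : Matrix (Fin m) (Fin m) ℝ) + F with hGdef
  have hSFS : S * F * S = E := by
    rw [hFdef]
    calc S * (S⁻¹ * E * S⁻¹) * S = S * (S⁻¹ * (E * (S⁻¹ * S))) := by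
          simp only [Matrix.mul_assoc]
      _ = E := by rw [hS2, Matrix.mul_one, cS]
  have hW_SGS : W = S * G * S := by
    rw [hGdef, Matrix.mul_add, Matrix.add_mul, Matrix.mul_one, hSFS, hSS, hW_def]
  have hGdetne : G.det ≠ 0 := by
    intro h
    apply hW.det_pos.ne'
    rw [hW_SGS, Matrix.det_mul, Matrix.det_mul, h, mul_zero, zero_mul]
  have hGdet : IsUnit G.det := hGdetne.isUnit
  have hG1 : G⁻¹ * G = 1 := Matrix.nonsing_inv_mul G hGdet
  have hWinv : W⁻¹ = S⁻¹ * G⁻¹ * S⁻¹ := by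
    rw [hW_SGS, Matrix.mul_inv_rev, Matrix.mul_inv_rev, Matrix.mul_assoc]
  have hWeinv : We⁻¹ = S⁻¹ * S⁻¹ := by rw [← hSS, Matrix.mul_inv_rev]
  set B := C * S⁻¹ with hBdef
  have hC : C = B * S := by rw [hBdef, Matrix.mul_assoc, hS2, Matrix.mul_one]
  have hCT : Cᵀ = S * Bᵀ := by rw [hC, Matrix.transpose_mul, hSsymm]
  have hGinv1 : G⁻¹ - 1 = -(G⁻¹ * F) := by
    calc G⁻¹ - 1 = G⁻¹ * 1 - G⁻¹ * G := by rw [hG1, Matrix.mul_one]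
      _ = G⁻¹ * (1 - G) := by rw [Matrix.mul_sub]
      _ = -(G⁻¹ * F) := by rw [hGdef]; rw [sub_add_cancel_left, Matrix.mul_neg]
  have e1 : (B * S) * (S⁻¹ * G⁻¹ * S⁻¹) * (S * Bᵀ) = B * G⁻¹ * Bᵀ := by
    simp only [Matrix.mul_assoc, cS, cS']
  have e2 : (B * S) * (S⁻¹ * S⁻¹) * (S * Bᵀ) = B * Bᵀ := by
    simp only [Matrix.mul_assoc, cS, cS']
  have key : C * W⁻¹ * Cᵀ - C * We⁻¹ * Cᵀ = -(B * (G⁻¹ * F) * Bᵀ) := by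
    rw [hWinv, hWeinv, hCT, hC, e1, e2, ← Matrix.neg_mul, ← Matrix.mul_neg, ← hGinv1,
      Matrix.mul_sub, Matrix.sub_mul, Matrix.mul_one]
  -- bound on ‖G⁻¹‖
  have one_e : ∀ y : EuclideanSpace ℝ (Fin m),
      Matrix.toEuclideanLin (1 : Matrix (Fin m) (Fin m) ℝ) y = y := fun y => by
    simp [Matrix.toEuclideanLin_apply]
  have hGinv_norm : ‖G⁻¹‖ ≤ (1 - η)⁻¹ := by
    refine norm_inv_le G hGdet _ (le_of_lt (inv_pos.mpr h1η)) fun y => ?_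
    have hGy : Matrix.toEuclideanLin G y = y + Matrix.toEuclideanLin F y := by
      rw [hGdef, map_add, LinearMap.add_apply, one_e]
    have t1 : ‖Matrix.toEuclideanLin F y‖ ≤ η * ‖y‖ := by
      rw [hηF]; exact le_norm_mul F y
    have t2 : ‖y‖ ≤ ‖Matrix.toEuclideanLin G y‖ + ‖Matrix.toEuclideanLin F y‖ := by
      have hy : y = Matrix.toEuclideanLin G y - Matrix.toEuclideanLin F y := by
        rw [hGy]; abel
      calc ‖y‖ = ‖Matrix.toEuclideanLin G y - Matrix.toEuclideanLin F y‖ := by rw [← hy]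
        _ ≤ _ := norm_sub_le _ _
    have hinv : (1 - η)⁻¹ * (1 - η) = 1 := inv_mul_cancel₀ h1η.ne'
    nlinarith [norm_nonneg (Matrix.toEuclideanLin G y), norm_nonneg y,
      inv_pos.mpr h1η]
  -- bound on ‖B‖
  set R := Matrix.PosSemidef.sqrt hK.posSemidef with hRdef
  have hRsymm : Rᵀ = R := by
    exact sqrtPS_transpose hK.posSemidef
  have hRR : R * R = K := sqrtPS_mul_self hK.posSemidef
  have hRnorm : ‖R‖ * ‖R‖ = ‖K‖ := by
    calc ‖R‖ * ‖R‖ = ‖Rᴴ * R‖ := (Matrix.l2_opNorm_conjTranspose_mul_self R).symm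
      _ = ‖K‖ := by rw [ct_eq, hRsymm, hRR]
  have hKdet : IsUnit K.det := hK.det_pos.ne'.isUnit
  have hCKP : C = K * P := by
    rw [hP, ← Matrix.mul_assoc, Matrix.mul_nonsing_inv K hKdet, Matrix.one_mul]
  set Q := R * (P * S⁻¹) with hQdef
  have hBRQ : B = R * Q := by
    rw [hBdef, hCKP, hQdef]
    simp only [← Matrix.mul_assoc]
    rw [hRR]
  have hQT : Qᵀ = S⁻¹ * (Pᵀ * R) := by
    rw [hQdef, Matrix.transpose_mul, Matrix.transpose_mul, hSinvT, hRsymm, Matrix.mul_assoc]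
  have hQQ : Qᵀ * Q = 1 := by
    rw [hQT, hQdef]
    calc S⁻¹ * (Pᵀ * R) * (R * (P * S⁻¹))
        = S⁻¹ * (Pᵀ * (R * R) * P) * S⁻¹ := by simp only [Matrix.mul_assoc]
      _ = S⁻¹ * We * S⁻¹ := by rw [hRR, ← hWe_def]
      _ = S⁻¹ * (S * S) * S⁻¹ := by rw [hSS]
      _ = 1 := by
          simp only [Matrix.mul_assoc]
          rw [hS1, Matrix.mul_one, hS2]
  have hQnorm : ‖Q‖ ≤ 1 := by
    have h2 : ‖Q‖ * ‖Q‖ = ‖(1 : Matrix (Fin m) (Fin m) ℝ)‖ := by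
      rw [← hQQ, ← ct_eq, Matrix.l2_opNorm_conjTranspose_mul_self]
    have h3 : ‖Q‖ * ‖Q‖ ≤ 1 := h2 ▸ norm_one_le m
    calc ‖Q‖ = |‖Q‖| := (abs_of_nonneg (norm_nonneg Q)).symm
      _ ≤ 1 := abs_le_one_iff_mul_self_le_one.mpr h3
  have hBnorm : ‖B‖ ≤ ‖R‖ := by
    calc ‖B‖ = ‖R * Q‖ := by rw [hBRQ]
      _ ≤ ‖R‖ * ‖Q‖ := Matrix.l2_opNorm_mul R Q
      _ ≤ ‖R‖ * 1 := by
          exact mul_le_mul_of_nonneg_left hQnorm (norm_nonneg R)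
      _ = ‖R‖ := mul_one _
  have hBB : ‖B‖ * ‖B‖ ≤ ‖K‖ := by nlinarith [norm_nonneg B, norm_nonneg R]
  -- final chain
  rw [specNorm_eq, specNorm_eq, key, norm_neg]
  have n3 : ‖Bᵀ‖ = ‖B‖ := by rw [← ct_eq]; exact Matrix.l2_opNorm_conjTranspose B
  have n2 : ‖G⁻¹ * F‖ ≤ (1 - η)⁻¹ * η :=
    le_trans (Matrix.l2_opNorm_mul _ _)
      (mul_le_mul hGinv_norm (le_of_eq hηF.symm) (norm_nonneg F) (le_of_lt (inv_pos.mpr h1η)))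
  have n1 : ‖B * (G⁻¹ * F) * Bᵀ‖ ≤ ‖B‖ * ‖G⁻¹ * F‖ * ‖B‖ := by
    calc ‖B * (G⁻¹ * F) * Bᵀ‖ ≤ ‖B * (G⁻¹ * F)‖ * ‖Bᵀ‖ := Matrix.l2_opNorm_mul _ _
      _ ≤ ‖B‖ * ‖G⁻¹ * F‖ * ‖Bᵀ‖ :=
          mul_le_mul_of_nonneg_right (Matrix.l2_opNorm_mul _ _) (norm_nonneg _)
      _ = ‖B‖ * ‖G⁻¹ * F‖ * ‖B‖ := by rw [n3]
  have hKnn : 0 ≤ ‖K‖ := norm_nonneg K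
  have hfin : ‖B‖ * ‖G⁻¹ * F‖ * ‖B‖ ≤ (η / (1 - η)) * ‖K‖ := by
    have h4 : ‖B‖ * ‖G⁻¹ * F‖ * ‖B‖ ≤ ‖B‖ * ((1 - η)⁻¹ * η) * ‖B‖ := by
      have := mul_le_mul_of_nonneg_left n2 (norm_nonneg B)
      exact mul_le_mul_of_nonneg_right this (norm_nonneg B)
    have h5 : ‖B‖ * ((1 - η)⁻¹ * η) * ‖B‖ = ((1 - η)⁻¹ * η) * (‖B‖ * ‖B‖) := by ring
    have h6 : ((1 - η)⁻¹ * η) * (‖B‖ * ‖B‖) ≤ ((1 - η)⁻¹ * η) * ‖K‖ :=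
      mul_le_mul_of_nonneg_left hBB
        (mul_nonneg (le_of_lt (inv_pos.mpr h1η)) hη0)
    rw [div_eq_mul_inv]
    calc ‖B‖ * ‖G⁻¹ * F‖ * ‖B‖ ≤ ((1 - η)⁻¹ * η) * (‖B‖ * ‖B‖) := by rw [← h5]; exact h4
      _ ≤ ((1 - η)⁻¹ * η) * ‖K‖ := h6
      _ = η * (1 - η)⁻¹ * ‖K‖ := by ring
  exact le_trans n1 hfin
end
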